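/- Let G be a connected finite simple graph on Fin n with strictly positive edge weights and signed weighted Laplacian L (a positive semidefinite graph Laplacian). Let K ≥ 1 and, for each k ∈ Fin K, fix distinct vertices i_k ≠ j_k, a constant c_k > 0, and v_k : Fin n → ℝ with L v_k = e_{i_k} - e_{j_k}; set r_k = v_k(i_k) - v_k(j_k). Define J = ∑_{k} c_k·(e_{i_k} - e_{j_k})(e_{i_k} - e_{j_k})ᵀ - L. Then: if ∑_{k} c_k r_k < 1, J is negative definite on mean-zero vectors (xᵀ J x < 0 for all nonzero x with ∑ x = 0); and if c_k r_k > 1 for some k, then J has a strictly positive eigenvalue. -/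

import Mathlib

open Matrix

/-- The signed weighted Laplacian of a simple graph `G` on `Fin n` with real edge
weights `w` (with `w i j = w j i` on edges). -/
def signedLaplacian {n : ℕ} (G : SimpleGraph (Fin n)) [DecidableRel G.Adj]
    (w : Fin n → Fin n → ℝ) : Matrix (Fin n) (Fin n) ℝ :=
  fun i j =>
    if i = j then ∑ k ∈ G.neighborFinset i, w i k
    else if G.Adj i j then -w i j else 0

section Aux

variable {n : ℕ} (G : SimpleGraph (Fin n)) [DecidableRel G.Adj] (w : Fin n → Fin n → ℝ)

lemma sl_transpose (hsymm : ∀ i j : Fin n, w i j = w j i) :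
    (signedLaplacian G w)ᵀ = signedLaplacian G w := by
  ext a b
  simp only [transpose_apply, signedLaplacian]
  by_cases h : a = b
  · subst h; rfl
  · rw [if_neg h, if_neg (Ne.symm h)]
    by_cases ha : G.Adj a b
    · rw [if_pos ha, if_pos (G.adj_symm ha), hsymm]
    · rw [if_neg ha, if_neg fun hc => ha (G.adj_symm hc)]

lemma sl_mulVec (x : Fin n → ℝ) (a : Fin n) :
    (signedLaplacian G w).mulVec x a
      = ∑ b, (if G.Adj a b then w a b * (x a - x b) else 0) := by
  have hsplit : ∀ b : Fin n, signedLaplacian G w a b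
      = (if a = b then ∑ k ∈ G.neighborFinset a, w a k else 0)
        + (if G.Adj a b then -w a b else 0) := by
    intro b
    simp only [signedLaplacian]
    by_cases h : a = b
    · subst h
      simp [G.irrefl]
    · simp [h]
  have hD : ∑ k ∈ G.neighborFinset a, w a k
      = ∑ b, (if G.Adj a b then w a b else 0) := by
    rw [SimpleGraph.neighborFinset_eq_filter, Finset.sum_filter]
  calc (signedLaplacian G w).mulVec x a
      = ∑ b, signedLaplacian G w a b * x b := rfl
    _ = ∑ b, ((if a = b then ∑ k ∈ G.neighborFinset a, w a k else 0) * x b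
          + (if G.Adj a b then -w a b else 0) * x b) := by
        refine Finset.sum_congr rfl fun b _ => ?_
        rw [hsplit b, add_mul]
    _ = (∑ b, (if a = b then ∑ k ∈ G.neighborFinset a, w a k else 0) * x b)
          + ∑ b, (if G.Adj a b then -w a b else 0) * x b := Finset.sum_add_distrib
    _ = (∑ k ∈ G.neighborFinset a, w a k) * x a
          + ∑ b, (if G.Adj a b then -w a b else 0) * x b := by
        congr 1
        rw [Finset.sum_eq_single a]
        · simp
        · intro b _ hb; simp [Ne.symm hb]
        · intro h; exact absurd (Finset.mem_univ a) h
    _ = ∑ b, (if G.Adj a b then w a b * (x a - x b) else 0) := by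
        rw [hD, Finset.sum_mul, ← Finset.sum_add_distrib]
        refine Finset.sum_congr rfl fun b _ => ?_
        split_ifs <;> ring

lemma sl_quad (x : Fin n → ℝ) :
    x ⬝ᵥ (signedLaplacian G w).mulVec x
      = ∑ a, ∑ b, (if G.Adj a b then w a b * (x a * (x a - x b)) else 0) := by
  unfold dotProduct
  refine Finset.sum_congr rfl fun a _ => ?_
  rw [sl_mulVec, Finset.mul_sum]
  refine Finset.sum_congr rfl fun b _ => ?_
  split_ifs <;> ring

lemma sl_quad_two (hsymm : ∀ i j : Fin n, w i j = w j i) (x : Fin n → ℝ) :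
    2 * (x ⬝ᵥ (signedLaplacian G w).mulVec x)
      = ∑ a, ∑ b, (if G.Adj a b then w a b * (x a - x b) ^ 2 else 0) := by
  have h1 := sl_quad G w x
  have h2 : x ⬝ᵥ (signedLaplacian G w).mulVec x
      = ∑ a, ∑ b, (if G.Adj a b then w a b * (x b * (x b - x a)) else 0) := by
    rw [h1, Finset.sum_comm]
    refine Finset.sum_congr rfl fun a _ => Finset.sum_congr rfl fun b _ => ?_
    by_cases h : G.Adj a b
    · rw [if_pos h, if_pos (G.adj_symm h), hsymm b a]
    · rw [if_neg h, if_neg fun hc => h (G.adj_symm hc)]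
  calc 2 * (x ⬝ᵥ (signedLaplacian G w).mulVec x)
      = (∑ a, ∑ b, (if G.Adj a b then w a b * (x a * (x a - x b)) else 0))
        + ∑ a, ∑ b, (if G.Adj a b then w a b * (x b * (x b - x a)) else 0) := by
        rw [← h1, ← h2]; ring
    _ = ∑ a, ∑ b, (if G.Adj a b then w a b * (x a - x b) ^ 2 else 0) := by
        rw [← Finset.sum_add_distrib]
        refine Finset.sum_congr rfl fun a _ => ?_
        rw [← Finset.sum_add_distrib]
        refine Finset.sum_congr rfl fun b _ => ?_
        split_ifs <;> ring

lemma sl_nonneg (hsymm : ∀ i j : Fin n, w i j = w j i)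
    (hpos : ∀ i j : Fin n, G.Adj i j → 0 < w i j) (x : Fin n → ℝ) :
    0 ≤ x ⬝ᵥ (signedLaplacian G w).mulVec x := by
  have h := sl_quad_two G w hsymm x
  have hnn : 0 ≤ ∑ a, ∑ b, (if G.Adj a b then w a b * (x a - x b) ^ 2 else 0) := by
    refine Finset.sum_nonneg fun a _ => Finset.sum_nonneg fun b _ => ?_
    split_ifs with hadj
    · exact mul_nonneg (le_of_lt (hpos a b hadj)) (sq_nonneg _)
    · exact le_refl 0
  linarith

lemma sl_pos (hconn : G.Connected) (hsymm : ∀ i j : Fin n, w i j = w j i)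
    (hpos : ∀ i j : Fin n, G.Adj i j → 0 < w i j) (x : Fin n → ℝ)
    (hx : x ≠ 0) (hsum : ∑ a, x a = 0) :
    0 < x ⬝ᵥ (signedLaplacian G w).mulVec x := by
  rcases lt_or_eq_of_le (sl_nonneg G w hsymm hpos x) with h | h
  · exact h
  -- quadratic form is zero: derive x constant, contradiction
  exfalso
  have h2 : ∑ a, ∑ b, (if G.Adj a b then w a b * (x a - x b) ^ 2 else 0) = 0 := by
    have := sl_quad_two G w hsymm x
    rw [← h] at this; linarith
  have hterm : ∀ a b : Fin n, G.Adj a b → x a = x b := by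
    intro a b hadj
    have hnn : ∀ a ∈ Finset.univ, (0 : ℝ) ≤
        ∑ b, (if G.Adj a b then w a b * (x a - x b) ^ 2 else 0) := by
      intro a _
      refine Finset.sum_nonneg fun b _ => ?_
      split_ifs with hadj'
      · exact mul_nonneg (le_of_lt (hpos _ _ hadj')) (sq_nonneg _)
      · exact le_refl 0
    have hinner := (Finset.sum_eq_zero_iff_of_nonneg hnn).mp h2 a (Finset.mem_univ a)
    have hnn' : ∀ b ∈ Finset.univ, (0 : ℝ) ≤
        (if G.Adj a b then w a b * (x a - x b) ^ 2 else 0) := by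
      intro b _
      split_ifs with hadj'
      · exact mul_nonneg (le_of_lt (hpos _ _ hadj')) (sq_nonneg _)
      · exact le_refl 0
    have := (Finset.sum_eq_zero_iff_of_nonneg hnn').mp hinner b (Finset.mem_univ b)
    rw [if_pos hadj] at this
    have hw := hpos a b hadj
    have : (x a - x b) ^ 2 = 0 := by
      by_contra hne
      have : 0 < (x a - x b) ^ 2 := lt_of_le_of_ne (sq_nonneg _) (Ne.symm hne)
      nlinarith
    have := pow_eq_zero_iff (n := 2) (by norm_num) |>.mp this
    linarith [sub_eq_zero.mp this]
  have hconst : ∀ a b : Fin n, x a = x b := by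
    intro a b
    obtain ⟨p⟩ := hconn.preconnected a b
    induction p with
    | nil => rfl
    | cons hadj _ ih => exact (hterm _ _ hadj).trans ih
  obtain ⟨a, ha⟩ := Function.ne_iff.mp hx
  have : ∑ b, x b = (n : ℝ) * x a := by
    rw [Finset.sum_congr rfl fun b _ => hconst b a]
    simp [Finset.sum_const, Finset.card_univ]
  rw [hsum] at this
  have hcard : (0 : ℝ) < (n : ℝ) := by
    exact_mod_cast Fin.pos a
  have : x a = 0 := by
    rcases mul_eq_zero.mp this.symm with h' | h'
    · exact absurd h' (ne_of_gt hcard)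
    · exact h'
  exact ha this

lemma sl_dot_symm (hsymm : ∀ i j : Fin n, w i j = w j i) (u y : Fin n → ℝ) :
    u ⬝ᵥ (signedLaplacian G w).mulVec y = y ⬝ᵥ (signedLaplacian G w).mulVec u := by
  rw [dotProduct_mulVec, ← mulVec_transpose, sl_transpose G w hsymm, dotProduct_comm]

lemma sl_cauchy_schwarz (hsymm : ∀ i j : Fin n, w i j = w j i)
    (hpos : ∀ i j : Fin n, G.Adj i j → 0 < w i j) (a b : Fin n → ℝ)
    (hb : 0 < b ⬝ᵥ (signedLaplacian G w).mulVec b) :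
    (a ⬝ᵥ (signedLaplacian G w).mulVec b) ^ 2
      ≤ (a ⬝ᵥ (signedLaplacian G w).mulVec a) * (b ⬝ᵥ (signedLaplacian G w).mulVec b) := by
  set L := signedLaplacian G w with hL
  set qa := a ⬝ᵥ L.mulVec a
  set qb := b ⬝ᵥ L.mulVec b
  set ab := a ⬝ᵥ L.mulVec b with hab
  set t : ℝ := -ab / qb with ht
  have h0 := sl_nonneg G w hsymm hpos (a + t • b)
  have hba : b ⬝ᵥ L.mulVec a = ab := by rw [hab, sl_dot_symm G w hsymm]
  have hexp : (a + t • b) ⬝ᵥ L.mulVec (a + t • b) = qa + 2 * t * ab + t ^ 2 * qb := by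
    rw [mulVec_add, mulVec_smul, dotProduct_add, add_dotProduct, add_dotProduct,
      dotProduct_smul, smul_dotProduct, smul_dotProduct, dotProduct_smul, hba]
    simp only [smul_eq_mul]
    ring
  rw [hexp] at h0
  have hqb : qb ≠ 0 := ne_of_gt hb
  have h1 : qa + 2 * t * ab + t ^ 2 * qb = (qa * qb - ab ^ 2) / qb := by
    rw [ht]; field_simp; ring
  rw [h1] at h0
  have h2 := mul_nonneg h0 (le_of_lt hb)
  rw [div_mul_cancel₀ _ hqb] at h2
  linarith

lemma sum_mulVec' {ι : Type*} (s : Finset ι) (M : ι → Matrix (Fin n) (Fin n) ℝ)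
    (x : Fin n → ℝ) : (∑ k ∈ s, M k).mulVec x = ∑ k ∈ s, (M k).mulVec x := by
  ext a
  simp only [mulVec, dotProduct, Matrix.sum_apply, Finset.sum_apply, Finset.sum_mul]
  exact Finset.sum_comm

lemma dot_sum' {ι : Type*} {s : Finset ι} (x : Fin n → ℝ) (f : ι → Fin n → ℝ) :
    x ⬝ᵥ (∑ k ∈ s, f k) = ∑ k ∈ s, x ⬝ᵥ f k := by
  simp only [dotProduct, Finset.sum_apply, Finset.mul_sum]
  exact Finset.sum_comm

lemma vecMulVec_mulVec' (u v x : Fin n → ℝ) :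
    (vecMulVec u v).mulVec x = (v ⬝ᵥ x) • u := by
  ext a
  simp only [mulVec, dotProduct, vecMulVec_apply, Pi.smul_apply, smul_eq_mul]
  rw [Finset.sum_mul]
  exact Finset.sum_congr rfl fun b _ => by ring

end Aux

/-- Effective-resistance stability criterion for several positive edges:
for J = ∑_k c_k (e_{i_k} - e_{j_k})(e_{i_k} - e_{j_k})ᵀ - L with L the Laplacian of a
connected positively weighted graph, c_k > 0, and r_k the effective resistance between
i_k and j_k, ∑_k c_k r_k < 1 implies J is negative definite on mean-zero vectors, and
c_k r_k > 1 for some k implies J has a strictly positive eigenvalue. -/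
theorem multi_positive_edge_resistance_criterion (n : ℕ)
    (G : SimpleGraph (Fin n)) [DecidableRel G.Adj] (hconn : G.Connected)
    (w : Fin n → Fin n → ℝ) (hsymm : ∀ i j : Fin n, w i j = w j i)
    (hpos : ∀ i j : Fin n, G.Adj i j → 0 < w i j)
    (K : ℕ) (hK : 1 ≤ K)
    (i j : Fin K → Fin n) (hij : ∀ k, i k ≠ j k)
    (c : Fin K → ℝ) (hc : ∀ k, 0 < c k)
    (v : Fin K → Fin n → ℝ)
    (hv : ∀ k, (signedLaplacian G w).mulVec (v k) =
      Pi.single (i k) 1 - Pi.single (j k) 1) :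
    ((∑ k, c k * (v k (i k) - v k (j k))) < 1 →
      ∀ x : Fin n → ℝ, x ≠ 0 → ∑ a, x a = 0 →
        x ⬝ᵥ ((∑ k, c k • vecMulVec (Pi.single (i k) 1 - Pi.single (j k) 1)
                (Pi.single (i k) 1 - Pi.single (j k) 1))
              - signedLaplacian G w).mulVec x < 0) ∧
    ((∃ k, 1 < c k * (v k (i k) - v k (j k))) →
      ∃ μ : ℝ, 0 < μ ∧ ∃ z : Fin n → ℝ, z ≠ 0 ∧
        ((∑ k, c k • vecMulVec (Pi.single (i k) 1 - Pi.single (j k) 1)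
                (Pi.single (i k) 1 - Pi.single (j k) 1))
              - signedLaplacian G w).mulVec z = μ • z) := by
  set L := signedLaplacian G w with hLdef
  set b : Fin K → (Fin n → ℝ) :=
    fun k => Pi.single (i k) 1 - Pi.single (j k) 1 with hbdef
  set J : Matrix (Fin n) (Fin n) ℝ :=
    (∑ k, c k • vecMulVec (b k) (b k)) - L with hJdef
  have hbdot : ∀ (k : Fin K) (x : Fin n → ℝ), b k ⬝ᵥ x = x (i k) - x (j k) := by
    intro k x
    simp [hbdef, sub_dotProduct, single_dotProduct]
  have hvb : ∀ k, L.mulVec (v k) = b k := hv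
  -- quadratic form of J
  have hJquad : ∀ x : Fin n → ℝ,
      x ⬝ᵥ J.mulVec x = (∑ k, c k * (b k ⬝ᵥ x) ^ 2) - x ⬝ᵥ L.mulVec x := by
    intro x
    rw [hJdef, sub_mulVec, dotProduct_sub, sum_mulVec']
    congr 1
    rw [dot_sum']
    refine Finset.sum_congr rfl fun k _ => ?_
    rw [smul_mulVec, vecMulVec_mulVec', dotProduct_smul, dotProduct_smul]
    simp only [smul_eq_mul]
    rw [dotProduct_comm x (b k)]
    ring
  have hr_eq : ∀ k, v k (i k) - v k (j k) = v k ⬝ᵥ L.mulVec (v k) := by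
    intro k
    rw [← hbdot k (v k), ← hvb k, dotProduct_comm (L.mulVec (v k)) (v k)]
  constructor
  · -- negative definite on mean-zero vectors
    intro hlt x hx hxsum
    have hqx : 0 < x ⬝ᵥ L.mulVec x := sl_pos G w hconn hsymm hpos x hx hxsum
    have hkbound : ∀ k : Fin K,
        c k * (b k ⬝ᵥ x) ^ 2
          ≤ c k * ((v k (i k) - v k (j k)) * (x ⬝ᵥ L.mulVec x)) := by
      intro k
      have hbx : b k ⬝ᵥ x = v k ⬝ᵥ L.mulVec x := by
        rw [← hvb k, dotProduct_mulVec, ← mulVec_transpose,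
          sl_transpose G w hsymm, dotProduct_comm]
      have hcs := sl_cauchy_schwarz G w hsymm hpos (v k) x hqx
      rw [hbx, hr_eq k]
      exact mul_le_mul_of_nonneg_left hcs (le_of_lt (hc k))
    have hsumle : (∑ k, c k * (b k ⬝ᵥ x) ^ 2)
        ≤ (∑ k, c k * (v k (i k) - v k (j k))) * (x ⬝ᵥ L.mulVec x) := by
      rw [Finset.sum_mul]
      refine Finset.sum_le_sum fun k _ => ?_
      calc c k * (b k ⬝ᵥ x) ^ 2
          ≤ c k * ((v k (i k) - v k (j k)) * (x ⬝ᵥ L.mulVec x)) := hkbound k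
        _ = c k * (v k (i k) - v k (j k)) * (x ⬝ᵥ L.mulVec x) := by ring
    rw [hJquad x]
    have : (∑ k, c k * (v k (i k) - v k (j k))) * (x ⬝ᵥ L.mulVec x)
        < x ⬝ᵥ L.mulVec x := by
      nlinarith
    linarith
  · -- positive eigenvalue
    rintro ⟨k, hk⟩
    have hrk_nonneg : 0 ≤ v k (i k) - v k (j k) := by
      rw [hr_eq k]; exact sl_nonneg G w hsymm hpos (v k)
    have hrk_pos : 0 < v k (i k) - v k (j k) := by
      rcases lt_or_eq_of_le hrk_nonneg with h | h
      · exact h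
      · exfalso; rw [← h] at hk; simp at hk; linarith
    set r := v k (i k) - v k (j k) with hrdef
    -- the Rayleigh quotient at v k is positive
    have hQ : 0 < v k ⬝ᵥ J.mulVec (v k) := by
      rw [hJquad (v k)]
      have hterm : c k * (b k ⬝ᵥ v k) ^ 2 ≤ ∑ l, c l * (b l ⬝ᵥ v k) ^ 2 := by
        refine Finset.single_le_sum (f := fun l => c l * (b l ⬝ᵥ v k) ^ 2) (fun l _ => ?_) (Finset.mem_univ k)
        exact mul_nonneg (le_of_lt (hc l)) (sq_nonneg _)
      have hbk : b k ⬝ᵥ v k = r := hbdot k (v k)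
      have hLk : v k ⬝ᵥ L.mulVec (v k) = r := (hr_eq k).symm
      rw [hLk]
      rw [hbk] at hterm
      nlinarith [hterm, hk, hrk_pos]
    -- J is hermitian
    have hJt : Jᵀ = J := by
      rw [hJdef, transpose_sub, transpose_sum, sl_transpose G w hsymm]
      congr 1
      refine Finset.sum_congr rfl fun l _ => ?_
      rw [transpose_smul]
      congr 1
      ext a b'
      simp [vecMulVec_apply, mul_comm]
    have hJ : J.IsHermitian := by
      rw [Matrix.IsHermitian, conjTranspose_eq_transpose_of_trivial, hJt]
    have hB : (-J).IsHermitian := hJ.neg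
    by_cases hneg : ∃ t, hB.eigenvalues t < 0
    · obtain ⟨t, htneg⟩ := hneg
      set u : Fin n → ℝ := ⇑(hB.eigenvectorBasis t) with hudef
      have heig := hB.mulVec_eigenvectorBasis t
      rw [neg_mulVec] at heig
      have heq : J.mulVec u = (-(hB.eigenvalues t)) • u := by
        have : J.mulVec u = -(hB.eigenvalues t • u) := by
          rw [← neg_eq_iff_eq_neg]
          exact heig
        rw [this, neg_smul]
      refine ⟨-(hB.eigenvalues t), by linarith, u, ?_, heq⟩
      intro hu0
      refine hB.eigenvectorBasis.orthonormal.ne_zero t ?_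
      ext a
      exact congrFun hu0 a
    · push_neg at hneg
      exfalso
      have hpsd : (-J).PosSemidef := hB.posSemidef_iff_eigenvalues_nonneg.mpr (fun t => hneg t)
      have h2 := hpsd.dotProduct_mulVec_nonneg (v k)
      have hstar : star (v k) = v k := by
        funext a; simp
      rw [hstar, neg_mulVec, dotProduct_neg] at h2
      linarith
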